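/- In AGL₁(k), define I = {identity}, J = {[[1,b],[0,1]] : b ≠ 0}, M = {[[a,b],[0,1]] : a ≠ 0, a ≠ 1}. Then the map ((a,x,t,b) ↦ (g₁,g₂)) with g₁ = [[a, t(1−a)],[0,1]] and g₂ = [[x, (b − t(1−a)(1−x))/(a−1)],[0,1]] is a bijection from (k∖{0,1}) × (k∖{0}) × k × (k∖{0}) onto the set {(g₁,g₂) ∈ AGL₁(k)² : g₁ ∈ M, [g₁,g₂] ∈ J}, and under this bijection [g₁,g₂] = [[1,b],[0,1]]. -/

import Mathlib

set_option linter.unnecessarySeqFocus false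

lemma inv_aux {k : Type*} [Field k] (a c : k) (ha : a ≠ 0) :
    (!![a, c; 0, 1] : Matrix (Fin 2) (Fin 2) k)⁻¹ = !![a⁻¹, -(a⁻¹ * c); 0, 1] := by
  apply Matrix.inv_eq_right_inv
  ext i j
  fin_cases i <;> fin_cases j <;> simp [Matrix.mul_apply, Fin.sum_univ_two] <;> field_simp <;> ring

lemma comm_aux {k : Type*} [Field k] (a c x d : k) (ha : a ≠ 0) (hx : x ≠ 0) :
    (!![a, c; 0, 1] : Matrix (Fin 2) (Fin 2) k) * !![x, d; 0, 1] *
      (!![a, c; 0, 1])⁻¹ * (!![x, d; 0, 1])⁻¹ =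
    !![1, c * (1 - x) + d * (a - 1); 0, 1] := by
  rw [inv_aux a c ha, inv_aux x d hx]
  ext i j
  fin_cases i <;> fin_cases j <;>
    simp [Matrix.mul_apply, Fin.sum_univ_two] <;> field_simp <;> ring

lemma entry_aux {k : Type*} [Field k] {a c a' c' : k}
    (h : (!![a, c; 0, 1] : Matrix (Fin 2) (Fin 2) k) = !![a', c'; 0, 1]) :
    a = a' ∧ c = c' := by
  constructor
  · simpa using congrFun (congrFun h 0) 0
  · simpa using congrFun (congrFun h 0) 1

theorem stmt11 {k : Type*} [Field k] :
    let f : {a : k // a ≠ 0 ∧ a ≠ 1} × {x : k // x ≠ 0} × k × {b : k // b ≠ 0} →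
        Matrix (Fin 2) (Fin 2) k × Matrix (Fin 2) (Fin 2) k :=
      fun p => (!![(p.1 : k), (p.2.2.1 : k) * (1 - p.1); 0, 1],
                !![(p.2.1 : k), ((p.2.2.2 : k) - (p.2.2.1 : k) * (1 - p.1) * (1 - p.2.1))
                    / ((p.1 : k) - 1); 0, 1])
    Set.BijOn f Set.univ
      {P : Matrix (Fin 2) (Fin 2) k × Matrix (Fin 2) (Fin 2) k |
        (∃ a c : k, a ≠ 0 ∧ a ≠ 1 ∧ P.1 = !![a, c; 0, 1]) ∧
        (∃ a c : k, a ≠ 0 ∧ P.2 = !![a, c; 0, 1]) ∧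
        (∃ b : k, b ≠ 0 ∧ P.1 * P.2 * (P.1)⁻¹ * (P.2)⁻¹ = !![1, b; 0, 1])} ∧
    ∀ p, (f p).1 * (f p).2 * ((f p).1)⁻¹ * ((f p).2)⁻¹ = !![1, (p.2.2.2 : k); 0, 1] := by
  intro f
  have key : ∀ p : {a : k // a ≠ 0 ∧ a ≠ 1} × {x : k // x ≠ 0} × k × {b : k // b ≠ 0},
      (f p).1 * (f p).2 * ((f p).1)⁻¹ * ((f p).2)⁻¹ = !![1, (p.2.2.2 : k); 0, 1] := by
    rintro ⟨⟨a, ha0, ha1⟩, ⟨x, hx⟩, t, ⟨b, hb⟩⟩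
    have ha1' : a - 1 ≠ 0 := sub_ne_zero.mpr ha1
    rw [show f (⟨⟨a, ha0, ha1⟩, ⟨x, hx⟩, t, ⟨b, hb⟩⟩) =
      (!![a, t * (1 - a); 0, 1], !![x, (b - t * (1 - a) * (1 - x)) / (a - 1); 0, 1]) from rfl]
    rw [comm_aux _ _ _ _ ha0 hx]
    congr 1
    field_simp
    ring_nf
  refine ⟨⟨fun p _ => ?_, fun p _ q _ hpq => ?_, fun P hP => ?_⟩, key⟩
  · rcases p with ⟨⟨a, ha0, ha1⟩, ⟨x, hx⟩, t, ⟨b, hb⟩⟩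
    refine ⟨⟨a, _, ha0, ha1, rfl⟩, ⟨x, _, hx, rfl⟩, b, hb, key _⟩
  · rcases p with ⟨⟨a, ha0, ha1⟩, ⟨x, hx⟩, t, ⟨b, hb⟩⟩
    rcases q with ⟨⟨a', ha0', ha1'⟩, ⟨x', hx'⟩, t', ⟨b', hb'⟩⟩
    obtain ⟨h1, h2⟩ := Prod.mk.injEq .. ▸ hpq
    obtain ⟨haa, hcc⟩ := entry_aux h1
    obtain ⟨hxx, hdd⟩ := entry_aux h2
    subst haa; subst hxx
    have ht : t = t' := by
      have h1a : (1 : k) - a ≠ 0 := sub_ne_zero.mpr (Ne.symm ha1)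
      exact mul_right_cancel₀ h1a hcc
    subst ht
    have hbb : b = b' := by
      have ha1'' : a - 1 ≠ 0 := sub_ne_zero.mpr ha1
      field_simp at hdd
      exact sub_left_inj.mp hdd
    subst hbb
    rfl
  · obtain ⟨⟨a, c, ha0, ha1, hP1⟩, ⟨x, d, hx, hP2⟩, b, hb, hcomm⟩ := hP
    have ha1' : (1 : k) - a ≠ 0 := sub_ne_zero.mpr (Ne.symm ha1)
    have ha1'' : a - 1 ≠ 0 := sub_ne_zero.mpr ha1
    refine ⟨⟨⟨a, ha0, ha1⟩, ⟨x, hx⟩, c / (1 - a), ⟨b, hb⟩⟩, trivial, ?_⟩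
    have hbval : c * (1 - x) + d * (a - 1) = b := by
      rw [hP1, hP2, comm_aux _ _ _ _ ha0 hx] at hcomm
      exact (entry_aux hcomm).2
    have hc : c / (1 - a) * (1 - a) = c := div_mul_cancel₀ c ha1'
    have hd : (b - c * (1 - x)) / (a - 1) = d := by
      rw [div_eq_iff ha1'']
      linear_combination -hbval
    show (!![a, c / (1 - a) * (1 - a); 0, 1],
          !![x, (b - c / (1 - a) * (1 - a) * (1 - x)) / (a - 1); 0, 1]) = P
    rw [hc, hd, ← hP1, ← hP2]
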